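/- For the back-and-forth dealing of ℓs cards to ℓ players with s odd, Z(j,i) = 1 when j < i and Z(j,i) = -1 when j > i. -/

import Mathlib

open Finset

/-- Signed pair count of a dealing method: `Z(j,i)` is the number of positions of
player `j` before positions of player `i`, minus the reverse. Positions are `1,…,n`. -/
def Zdeal (n : ℕ) (f : ℕ → ℕ) (j i : ℕ) : ℤ :=
  (((Finset.Icc 1 n ×ˢ Finset.Icc 1 n).filter fun pq =>
      pq.1 < pq.2 ∧ f pq.1 = j ∧ f pq.2 = i).card : ℤ)
  - (((Finset.Icc 1 n ×ˢ Finset.Icc 1 n).filter fun pq =>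
      pq.1 < pq.2 ∧ f pq.1 = i ∧ f pq.2 = j).card : ℤ)

/-- The back-and-forth dealing with `ℓ` players: odd rounds deal in order `1,…,ℓ`,
even rounds in order `ℓ,…,1`. Positions are `1,…,ℓs`. -/
def backForth (ℓ : ℕ) (t : ℕ) : ℕ :=
  if ((t - 1) / ℓ) % 2 = 0 then (t - 1) % ℓ + 1 else ℓ - (t - 1) % ℓ

/-- Position of player `j` in round `r` (rounds indexed from 0). -/
def bfPos (ℓ j r : ℕ) : ℕ := r * ℓ + (if r % 2 = 0 then j else ℓ + 1 - j)

lemma bfPos_bounds {ℓ j : ℕ} (hj1 : 1 ≤ j) (hj2 : j ≤ ℓ) (r : ℕ) :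
    r * ℓ + 1 ≤ bfPos ℓ j r ∧ bfPos ℓ j r ≤ (r + 1) * ℓ := by
  have h : (r + 1) * ℓ = r * ℓ + ℓ := by ring
  unfold bfPos; split <;> omega

lemma backForth_eq (ℓ r c : ℕ) (hc1 : 1 ≤ c) (hc2 : c ≤ ℓ) :
    backForth ℓ (r * ℓ + c) = if r % 2 = 0 then c else ℓ + 1 - c := by
  unfold backForth
  have hm : ℓ * r = r * ℓ := Nat.mul_comm _ _
  have h1 : r * ℓ + c - 1 = ℓ * r + (c - 1) := by omega
  have hℓ : 0 < ℓ := by omega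
  have hlt : c - 1 < ℓ := by omega
  rw [h1, Nat.mul_add_div hℓ, Nat.mul_add_mod, Nat.div_eq_of_lt hlt,
    Nat.mod_eq_of_lt hlt, Nat.add_zero]
  split <;> omega

lemma backForth_bfPos {ℓ j : ℕ} (hj1 : 1 ≤ j) (hj2 : j ≤ ℓ) (r : ℕ) :
    backForth ℓ (bfPos ℓ j r) = j := by
  unfold bfPos
  by_cases hr : r % 2 = 0
  · rw [if_pos hr, backForth_eq ℓ r j hj1 hj2, if_pos hr]
  · rw [if_neg hr, backForth_eq ℓ r (ℓ + 1 - j) (by omega) (by omega), if_neg hr]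
    omega

lemma exists_bfPos {ℓ s t j : ℕ} (ht : t ∈ Icc 1 (ℓ * s)) (hf : backForth ℓ t = j) :
    ∃ r < s, bfPos ℓ j r = t := by
  simp only [mem_Icc] at ht
  have hℓ : 1 ≤ ℓ := by by_contra h; push_neg at h; interval_cases ℓ <;> omega
  refine ⟨(t - 1) / ℓ, ?_, ?_⟩
  · rw [Nat.div_lt_iff_lt_mul (by omega : 0 < ℓ)]
    have : ℓ * s = s * ℓ := Nat.mul_comm _ _
    omega
  · have hmod : (t - 1) % ℓ < ℓ := Nat.mod_lt _ (by omega)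
    have hdm := Nat.div_add_mod (t - 1) ℓ
    have hcomm : (t - 1) / ℓ * ℓ = ℓ * ((t - 1) / ℓ) := Nat.mul_comm _ _
    unfold backForth at hf
    unfold bfPos
    split at hf <;> rename_i h
    · rw [if_pos h]; omega
    · rw [if_neg h]; omega

lemma bfPos_inj {ℓ j : ℕ} (hj1 : 1 ≤ j) (hj2 : j ≤ ℓ) {r r' : ℕ}
    (h : bfPos ℓ j r = bfPos ℓ j r') : r = r' := by
  obtain ⟨h1, h2⟩ := bfPos_bounds hj1 hj2 r
  obtain ⟨h1', h2'⟩ := bfPos_bounds hj1 hj2 r'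
  rcases lt_trichotomy r r' with hlt | heq | hlt
  · have : (r + 1) * ℓ ≤ r' * ℓ := Nat.mul_le_mul_right _ (by omega)
    omega
  · exact heq
  · have : (r' + 1) * ℓ ≤ r * ℓ := Nat.mul_le_mul_right _ (by omega)
    omega

lemma bfPos_lt_iff {ℓ a b : ℕ} (ha1 : 1 ≤ a) (ha2 : a ≤ ℓ) (hb1 : 1 ≤ b) (hb2 : b ≤ ℓ)
    (r r' : ℕ) :
    bfPos ℓ a r < bfPos ℓ b r' ↔
      r < r' ∨ (r = r' ∧ ((r % 2 = 0 ∧ a < b) ∨ (r % 2 ≠ 0 ∧ b < a))) := by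
  obtain ⟨h1, h2⟩ := bfPos_bounds ha1 ha2 r
  obtain ⟨h1', h2'⟩ := bfPos_bounds hb1 hb2 r'
  rcases lt_trichotomy r r' with hlt | heq | hlt
  · have : (r + 1) * ℓ ≤ r' * ℓ := Nat.mul_le_mul_right _ (by omega)
    simp only [hlt, true_or, iff_true]
    omega
  · subst heq
    unfold bfPos
    constructor
    · intro h
      split at h <;> rename_i hr <;> [exact Or.inr ⟨rfl, Or.inl ⟨hr, by omega⟩⟩;
        exact Or.inr ⟨rfl, Or.inr ⟨hr, by omega⟩⟩]
    · rintro (h | ⟨-, (⟨hr, hab⟩ | ⟨hr, hab⟩)⟩)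
      · omega
      · simp [hr]; omega
      · simp [hr]; omega
  · have : (r' + 1) * ℓ ≤ r * ℓ := Nat.mul_le_mul_right _ (by omega)
    constructor
    · intro h; omega
    · rintro (h | ⟨h, -⟩) <;> omega

lemma card_pairs (ℓ s a b : ℕ) (ha1 : 1 ≤ a) (ha2 : a ≤ ℓ) (hb1 : 1 ≤ b) (hb2 : b ≤ ℓ) :
    ((Finset.Icc 1 (ℓ*s) ×ˢ Finset.Icc 1 (ℓ*s)).filter fun pq =>
        pq.1 < pq.2 ∧ backForth ℓ pq.1 = a ∧ backForth ℓ pq.2 = b).card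
      = ((range s ×ˢ range s).filter fun rr => bfPos ℓ a rr.1 < bfPos ℓ b rr.2).card := by
  symm
  apply Finset.card_bij (fun rr _ => (bfPos ℓ a rr.1, bfPos ℓ b rr.2))
  · rintro ⟨r, r'⟩ hmem
    simp only [mem_filter, mem_product, mem_range, mem_Icc] at hmem ⊢
    obtain ⟨⟨hr, hr'⟩, hlt⟩ := hmem
    obtain ⟨p1, p2⟩ := bfPos_bounds ha1 ha2 r
    obtain ⟨q1, q2⟩ := bfPos_bounds hb1 hb2 r'
    have hrℓ : (r + 1) * ℓ ≤ s * ℓ := Nat.mul_le_mul_right _ (by omega)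
    have hrℓ' : (r' + 1) * ℓ ≤ s * ℓ := Nat.mul_le_mul_right _ (by omega)
    have hs : s * ℓ = ℓ * s := by ring
    exact ⟨⟨⟨by omega, by omega⟩, by omega, by omega⟩, hlt,
      backForth_bfPos ha1 ha2 r, backForth_bfPos hb1 hb2 r'⟩
  · rintro ⟨r1, r1'⟩ h1 ⟨r2, r2'⟩ h2 heq
    simp only [Prod.mk.injEq] at heq
    obtain ⟨e1, e2⟩ := heq
    have := bfPos_inj ha1 ha2 e1
    have := bfPos_inj hb1 hb2 e2
    simp_all
  · rintro ⟨p, q⟩ hmem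
    simp only [mem_filter, mem_product] at hmem
    obtain ⟨⟨hp, hq⟩, hlt, hfa, hfb⟩ := hmem
    obtain ⟨r, hr, hrp⟩ := exists_bfPos hp hfa
    obtain ⟨r', hr', hrq⟩ := exists_bfPos hq hfb
    refine ⟨(r, r'), ?_, ?_⟩
    · simp only [mem_filter, mem_product, mem_range]
      exact ⟨⟨hr, hr'⟩, by rw [hrp, hrq]; exact hlt⟩
    · simp [hrp, hrq]

lemma even_count (n : ℕ) : ((range n).filter fun r => r % 2 = 0).card = (n + 1) / 2 := by
  induction n with
  | zero => simp
  | succ n ih =>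
    rw [range_add_one, filter_insert]
    by_cases h : n % 2 = 0
    · rw [if_pos h, card_insert_of_notMem (by simp)]
      omega
    · rw [if_neg h]
      omega

lemma odd_count (n : ℕ) : ((range n).filter fun r => r % 2 = 1).card = n / 2 := by
  induction n with
  | zero => simp
  | succ n ih =>
    rw [range_add_one, filter_insert]
    by_cases h : n % 2 = 1
    · rw [if_pos h, card_insert_of_notMem (by simp)]
      omega
    · rw [if_neg h]
      omega

lemma diag_card (s : ℕ) (Q : ℕ → Prop) [DecidablePred Q] :
    ((range s ×ˢ range s).filter fun rr => rr.1 = rr.2 ∧ Q rr.1).card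
      = ((range s).filter Q).card := by
  apply Finset.card_bij (fun rr _ => rr.1)
  · rintro ⟨r, r'⟩ h
    simp only [mem_filter, mem_product, mem_range] at h ⊢
    tauto
  · rintro ⟨r1, r1'⟩ h1 ⟨r2, r2'⟩ h2 heq
    simp only [mem_filter, mem_product] at h1 h2
    simp_all [Prod.ext_iff]
  · intro r hr
    simp only [mem_filter, mem_range] at hr
    exact ⟨(r, r), by simp [mem_filter, mem_range, hr.1, hr.2], rfl⟩

lemma index_card (ℓ s a b : ℕ) (ha1 : 1 ≤ a) (ha2 : a ≤ ℓ) (hb1 : 1 ≤ b) (hb2 : b ≤ ℓ) :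
    ((range s ×ˢ range s).filter fun rr => bfPos ℓ a rr.1 < bfPos ℓ b rr.2).card
      = ((range s ×ˢ range s).filter fun rr => rr.1 < rr.2).card
        + ((range s).filter fun r =>
            (r % 2 = 0 ∧ a < b) ∨ (r % 2 = 1 ∧ b < a)).card := by
  have key : ∀ rr ∈ (range s ×ˢ range s),
      (bfPos ℓ a rr.1 < bfPos ℓ b rr.2) ↔
        (rr.1 < rr.2 ∨ (rr.1 = rr.2 ∧ ((rr.1 % 2 = 0 ∧ a < b) ∨ (rr.1 % 2 = 1 ∧ b < a)))) := by
    intro rr _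
    rw [bfPos_lt_iff ha1 ha2 hb1 hb2 rr.1 rr.2]
    omega
  have hdisj : Disjoint
      ((range s ×ˢ range s).filter fun rr => rr.1 < rr.2)
      ((range s ×ˢ range s).filter fun rr =>
        rr.1 = rr.2 ∧ ((rr.1 % 2 = 0 ∧ a < b) ∨ (rr.1 % 2 = 1 ∧ b < a))) := by
    rw [disjoint_filter]
    rintro ⟨r, r'⟩ - h ⟨h1, -⟩
    omega
  rw [filter_congr key, filter_or, card_union_of_disjoint hdisj]
  congr 1
  exact diag_card s (fun r => (r % 2 = 0 ∧ a < b) ∨ (r % 2 = 1 ∧ b < a))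


/-- For the back-and-forth dealing with an odd number `s` of rounds,
`Z(j,i) = 1` when `j < i` and `Z(j,i) = -1` when `j > i`. -/
theorem Zdeal_backForth_odd (ℓ s : ℕ) (hs : Odd s) (i j : ℕ)
    (hi : i ∈ Icc 1 ℓ) (hj : j ∈ Icc 1 ℓ) (hij : i ≠ j) :
    Zdeal (ℓ * s) (backForth ℓ) j i = if j < i then (1 : ℤ) else -1 := by
  simp only [mem_Icc] at hi hj
  unfold Zdeal
  rw [card_pairs ℓ s j i hj.1 hj.2 hi.1 hi.2, card_pairs ℓ s i j hi.1 hi.2 hj.1 hj.2,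
    index_card ℓ s j i hj.1 hj.2 hi.1 hi.2, index_card ℓ s i j hi.1 hi.2 hj.1 hj.2]
  obtain ⟨k, hk⟩ := hs
  rcases Nat.lt_or_ge j i with hlt | hge
  · rw [if_pos hlt]
    have e1 : ((range s).filter fun r => (r % 2 = 0 ∧ j < i) ∨ (r % 2 = 1 ∧ i < j))
        = (range s).filter fun r => r % 2 = 0 :=
      filter_congr (fun r _ => by omega)
    have e2 : ((range s).filter fun r => (r % 2 = 0 ∧ i < j) ∨ (r % 2 = 1 ∧ j < i))
        = (range s).filter fun r => r % 2 = 1 :=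
      filter_congr (fun r _ => by omega)
    rw [e1, e2, even_count, odd_count]
    push_cast
    omega
  · have hlt : i < j := by omega
    rw [if_neg (by omega)]
    have e1 : ((range s).filter fun r => (r % 2 = 0 ∧ j < i) ∨ (r % 2 = 1 ∧ i < j))
        = (range s).filter fun r => r % 2 = 1 :=
      filter_congr (fun r _ => by omega)
    have e2 : ((range s).filter fun r => (r % 2 = 0 ∧ i < j) ∨ (r % 2 = 1 ∧ j < i))
        = (range s).filter fun r => r % 2 = 0 :=
      filter_congr (fun r _ => by omega)
    rw [e1, e2, even_count, odd_count]
    push_cast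
    omega
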